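/- Assume M_nature = ∅ (so p̄_{0,μ} is given for every μ ∈ M and Σ_{0,μ,μ} = (1/p̄_{0,μ}) V* for all μ ∈ M). Then for every μ ∈ M_l and every integer T ≥ 1, the following upper bound holds in the positive semidefinite order: Σ_{T,μ,μ} ⪯ ( ∑_{t=1}^{T} b_{T,t} (∑_{ν∈M_l} J̄_{T,t+1,μ,ν})² / (min_{ν∈M_l} w_{t,ν}) + b_{T,0} / (min_{ν∈M} p̄_{0,ν}) ) · V*. -/

import Mathlib

open Matrix Finset Filter

noncomputable section

/-- In-neighbourhood of `μ` in the directed graph with edge set `E`. -/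
def Nin {K : ℕ} (E : Finset (Fin K × Fin K)) (μ : Fin K) : Finset (Fin K) :=
  Finset.univ.filter (fun ν => (ν, μ) ∈ E)

/-- The set of learning models (those with at least one incoming edge). -/
def Ml {K : ℕ} (E : Finset (Fin K × Fin K)) : Finset (Fin K) :=
  Finset.univ.filter (fun μ => Nin E μ ≠ ∅)

/-- The set of models with no incoming edge (stable data sources). -/
def Mu {K : ℕ} (E : Finset (Fin K × Fin K)) : Finset (Fin K) :=
  Finset.univ.filter (fun μ => Nin E μ = ∅)

/-- The edge relation: `EdgeRel E a b` iff `(a, b) ∈ E`. -/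
def EdgeRel {K : ℕ} (E : Finset (Fin K × Fin K)) : Fin K → Fin K → Prop :=
  fun a b => (a, b) ∈ E

open Classical in
/-- Models in `M_l` not reachable by a directed path from any node of `M_u`. -/
def MlInf {K : ℕ} (E : Finset (Fin K × Fin K)) : Finset (Fin K) :=
  (Ml E).filter (fun μ => ∀ ν ∈ Mu E, ¬ Relation.TransGen (EdgeRel E) ν μ)

open Classical in
/-- Models in `M_l^∞` together with models reachable from some node of `M_l^∞`. -/
def Mlc {K : ℕ} (E : Finset (Fin K × Fin K)) : Finset (Fin K) :=
  (Ml E).filter (fun μ => μ ∈ MlInf E ∨ ∃ ν ∈ MlInf E, Relation.TransGen (EdgeRel E) ν μ)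

/-- The non-collapsing learning models. -/
def Mlnc {K : ℕ} (E : Finset (Fin K × Fin K)) : Finset (Fin K) := Ml E \ Mlc E

/-- The total limiting proportion `w_{t,ν} = ∑_{m ∈ Nin(ν)} p̄_{t,m→ν}`. -/
def wgt {K : ℕ} (E : Finset (Fin K × Fin K)) (pbar : ℕ → Fin K → Fin K → ℝ)
    (t : ℕ) (ν : Fin K) : ℝ :=
  ∑ m ∈ Nin E ν, pbar t m ν

/-- The row-stochastic matrix `P̄_t`: `P̄_{t,μ,ν} = p̄_{t,ν→μ}/w_{t,μ}` if `μ ∈ M_l` and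
`ν ∈ Nin(μ)`, `P̄_{t,μ,μ} = 1` if `μ ∈ M_u`, and `0` otherwise. -/
def Pbar {K : ℕ} (E : Finset (Fin K × Fin K)) (pbar : ℕ → Fin K → Fin K → ℝ)
    (t : ℕ) : Matrix (Fin K) (Fin K) ℝ :=
  Matrix.of fun μ ν =>
    if μ ∈ Ml E then (if ν ∈ Nin E μ then pbar t ν μ / wgt E pbar t μ else 0)
    else (if μ = ν then 1 else 0)

/-- `Jmat P t s = P_t P_{t−1} ⋯ P_s` (equal to `I` when `s = t + 1`). -/
def Jmat {K : ℕ} (P : ℕ → Matrix (Fin K) (Fin K) ℝ) (t s : ℕ) : Matrix (Fin K) (Fin K) ℝ :=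
  ((List.range' s (t + 1 - s)).reverse.map P).prod

/-- The Kronecker product `Q ⊗ I_d`, as a `dK × dK` matrix with blocks indexed by `Fin K`. -/
def kronId {K d : ℕ} (Q : Matrix (Fin K) (Fin K) ℝ) :
    Matrix (Fin K × Fin d) (Fin K × Fin d) ℝ :=
  Matrix.of fun p r => Q p.1 r.1 * (if p.2 = r.2 then 1 else 0)

/-- The block matrix `Σ_0`: `Σ_{0,μ,ν} = (1/p̄_{0,μ}) V*` if `μ = ν ∉ M_nature`, else `0`. -/
def Sigma0 {K d : ℕ} (Mnature : Finset (Fin K)) (p0 : Fin K → ℝ)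
    (Vstar : Matrix (Fin d) (Fin d) ℝ) : Matrix (Fin K × Fin d) (Fin K × Fin d) ℝ :=
  Matrix.of fun p r =>
    if p.1 = r.1 ∧ p.1 ∉ Mnature then (1 / p0 p.1) * Vstar p.2 r.2 else 0

/-- The block matrix `V_t`: `V_{t,μ,ν} = (q_{t,μ∩ν}/(w_{t,μ}w_{t,ν})) V*` if `μ, ν ∈ M_l`,
else `0`. -/
def Vt {K d : ℕ} (E : Finset (Fin K × Fin K)) (pbar : ℕ → Fin K → Fin K → ℝ)
    (q : ℕ → Fin K → Fin K → ℝ) (Vstar : Matrix (Fin d) (Fin d) ℝ) (t : ℕ) :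
    Matrix (Fin K × Fin d) (Fin K × Fin d) ℝ :=
  Matrix.of fun p r =>
    if p.1 ∈ Ml E ∧ r.1 ∈ Ml E then
      (q t p.1 r.1 / (wgt E pbar t p.1 * wgt E pbar t r.1)) * Vstar p.2 r.2
    else 0

end

open Matrix Finset

namespace Stmt5Aux



lemma smul_psd {d : ℕ} {V : Matrix (Fin d) (Fin d) ℝ} (hV : V.PosSemidef) {c : ℝ} (hc : 0 ≤ c) :
    (c • V).PosSemidef := by
  constructor
  · unfold Matrix.IsHermitian
    rw [conjTranspose_smul, hV.1.eq, star_trivial]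
  · intro x
    exact (Matrix.PosSemidef.smul hV hc).2 x

lemma list_prod_stoch {K : ℕ} (l : List (Matrix (Fin K) (Fin K) ℝ))
    (h : ∀ A ∈ l, (∀ i j, 0 ≤ A i j) ∧ ∀ i, ∑ j, A i j = 1) :
    (∀ i j, 0 ≤ l.prod i j) ∧ ∀ i, ∑ j, l.prod i j = 1 := by
  induction l with
  | nil =>
    constructor
    · intro i j
      rw [List.prod_nil, Matrix.one_apply]
      positivity
    · intro i
      simp [Matrix.one_apply]
  | cons A l ih =>
    obtain ⟨hA1, hA2⟩ := h A List.mem_cons_self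
    obtain ⟨ih1, ih2⟩ := ih (fun B hB => h B (List.mem_cons_of_mem _ hB))
    rw [List.prod_cons]
    constructor
    · intro i j
      rw [Matrix.mul_apply]
      exact Finset.sum_nonneg fun k _ => mul_nonneg (hA1 i k) (ih1 k j)
    · intro i
      simp_rw [Matrix.mul_apply]
      rw [Finset.sum_comm]
      simp_rw [← Finset.mul_sum]
      simp_rw [fun k => ih2 k]
      simpa using hA2 i



lemma wgt_ge {K : ℕ} {E : Finset (Fin K × Fin K)} {pbar : ℕ → Fin K → Fin K → ℝ}
    {α : ℝ} {t : ℕ} (hα0 : 0 < α)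
    (hpbarα : ∀ ν μ : Fin K, (ν, μ) ∈ E → α ≤ pbar t ν μ)
    {μ : Fin K} (hμ : μ ∈ Ml E) : α ≤ wgt E pbar t μ := by
  have hne : (Nin E μ).Nonempty := by
    rw [Ml, Finset.mem_filter] at hμ
    exact Finset.nonempty_iff_ne_empty.2 hμ.2
  obtain ⟨m, hm⟩ := hne
  have hmE : (m, μ) ∈ E := by
    rw [Nin, Finset.mem_filter] at hm; exact hm.2
  calc α ≤ pbar t m μ := hpbarα m μ hmE
    _ ≤ wgt E pbar t μ := by
      apply Finset.single_le_sum (fun n hn => ?_) hm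
      have : (n, μ) ∈ E := by rw [Nin, Finset.mem_filter] at hn; exact hn.2
      exact le_of_lt (lt_of_lt_of_le hα0 (hpbarα n μ this))

lemma Pbar_nonneg {K : ℕ} {E : Finset (Fin K × Fin K)} {pbar : ℕ → Fin K → Fin K → ℝ}
    {α : ℝ} {t : ℕ} (hα0 : 0 < α)
    (hpbarα : ∀ ν μ : Fin K, (ν, μ) ∈ E → α ≤ pbar t ν μ) :
    ∀ μ ν, 0 ≤ Pbar E pbar t μ ν := by
  intro μ ν
  rw [Pbar]
  by_cases hμ : μ ∈ Ml E
  · simp only [Matrix.of_apply, if_pos hμ]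
    by_cases hν : ν ∈ Nin E μ
    · rw [if_pos hν]
      have hE : (ν, μ) ∈ E := by rw [Nin, Finset.mem_filter] at hν; exact hν.2
      apply div_nonneg (le_of_lt (lt_of_lt_of_le hα0 (hpbarα ν μ hE)))
      exact le_of_lt (lt_of_lt_of_le hα0 (wgt_ge hα0 hpbarα hμ))
    · rw [if_neg hν]
  · simp only [Matrix.of_apply, if_neg hμ]
    split <;> norm_num

lemma Pbar_rowsum {K : ℕ} {E : Finset (Fin K × Fin K)} {pbar : ℕ → Fin K → Fin K → ℝ}
    {α : ℝ} {t : ℕ} (hα0 : 0 < α)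
    (hpbarα : ∀ ν μ : Fin K, (ν, μ) ∈ E → α ≤ pbar t ν μ) :
    ∀ μ, ∑ ν, Pbar E pbar t μ ν = 1 := by
  intro μ
  by_cases hμ : μ ∈ Ml E
  · have hw : wgt E pbar t μ ≠ 0 := ne_of_gt (lt_of_lt_of_le hα0 (wgt_ge hα0 hpbarα hμ))
    simp only [Pbar, Matrix.of_apply, if_pos hμ]
    rw [Finset.sum_ite_mem, Finset.univ_inter, ← Finset.sum_div]
    rw [show ∑ m ∈ Nin E μ, pbar t m μ = wgt E pbar t μ from rfl, div_self hw]
  · simp only [Pbar, Matrix.of_apply, if_neg hμ]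
    simp



lemma Jmat_self_succ {K : ℕ} (P : ℕ → Matrix (Fin K) (Fin K) ℝ) (t : ℕ) :
    Jmat P t (t + 1) = 1 := by
  simp [Jmat, Nat.sub_self]

lemma Jmat_succ {K : ℕ} (P : ℕ → Matrix (Fin K) (Fin K) ℝ) {t s : ℕ} (h : s ≤ t + 1) :
    Jmat P (t + 1) s = P (t + 1) * Jmat P t s := by
  unfold Jmat
  have h1 : t + 1 + 1 - s = (t + 1 - s) + 1 := by omega
  rw [h1, List.range'_concat]
  have h2 : s + 1 * (t + 1 - s) = t + 1 := by omega
  rw [h2, List.reverse_append]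
  simp

lemma Jmat_stoch {K : ℕ} {E : Finset (Fin K × Fin K)} {pbar : ℕ → Fin K → Fin K → ℝ}
    {α : ℝ} (hα0 : 0 < α)
    (hpbarα : ∀ t, 1 ≤ t → ∀ ν μ : Fin K, (ν, μ) ∈ E → α ≤ pbar t ν μ)
    {t s : ℕ} (hs : 1 ≤ s) :
    (∀ i j, 0 ≤ Jmat (Pbar E pbar) t s i j) ∧ ∀ i, ∑ j, Jmat (Pbar E pbar) t s i j = 1 := by
  apply list_prod_stoch
  intro A hA
  rw [List.mem_map] at hA
  obtain ⟨u, hu, rfl⟩ := hA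
  rw [List.mem_reverse, List.mem_range'_1] at hu
  have hu1 : 1 ≤ u := le_trans hs hu.1
  exact ⟨Pbar_nonneg hα0 (hpbarα u hu1), Pbar_rowsum hα0 (hpbarα u hu1)⟩



noncomputable def S0mat {K : ℕ} (p0 : Fin K → ℝ) : Matrix (Fin K) (Fin K) ℝ :=
  Matrix.of fun μ ν => if μ = ν then 1 / p0 μ else 0

noncomputable def Qmat {K : ℕ} (E : Finset (Fin K × Fin K)) (pbar : ℕ → Fin K → Fin K → ℝ)
    (q : ℕ → Fin K → Fin K → ℝ) (t : ℕ) : Matrix (Fin K) (Fin K) ℝ :=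
  Matrix.of fun μ ν => if μ ∈ Ml E ∧ ν ∈ Ml E then
    q t μ ν / (wgt E pbar t μ * wgt E pbar t ν) else 0

lemma kron_conj {K d : ℕ} (Q S : Matrix (Fin K) (Fin K) ℝ)
    (V : Matrix (Fin d) (Fin d) ℝ) (Sg : Matrix (Fin K × Fin d) (Fin K × Fin d) ℝ)
    (hSg : ∀ p r, Sg p r = S p.1 r.1 * V p.2 r.2) (p r : Fin K × Fin d) :
    (kronId (d := d) Q * Sg * (kronId (d := d) Q)ᵀ) p r = (Q * S * Qᵀ) p.1 r.1 * V p.2 r.2 := by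
  simp only [Matrix.mul_apply, Matrix.transpose_apply, kronId, Matrix.of_apply, hSg,
    Fintype.sum_prod_type]
  simp only [mul_ite, ite_mul, mul_one, mul_zero, zero_mul, one_mul,
    Finset.sum_ite_eq, Finset.sum_ite_eq', Finset.mem_univ, if_true]
  simp only [Finset.sum_mul]
  refine Finset.sum_congr rfl fun x _ => ?_
  refine Finset.sum_congr rfl fun y _ => ?_
  ring



noncomputable def Sunroll {K : ℕ} (E : Finset (Fin K × Fin K)) (pbar : ℕ → Fin K → Fin K → ℝ)
    (q : ℕ → Fin K → Fin K → ℝ) (p0 : Fin K → ℝ) (c : ℕ → ℝ) (T : ℕ) :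
    Matrix (Fin K) (Fin K) ℝ :=
  (c T / c 0) • (Jmat (Pbar E pbar) T 1 * S0mat p0 * (Jmat (Pbar E pbar) T 1)ᵀ) +
  ∑ t ∈ Finset.Icc 1 T, (c T / c t) •
    (Jmat (Pbar E pbar) T (t + 1) * Qmat E pbar q t * (Jmat (Pbar E pbar) T (t + 1))ᵀ)

lemma Sunroll_zero {K : ℕ} (E : Finset (Fin K × Fin K)) (pbar : ℕ → Fin K → Fin K → ℝ)
    (q : ℕ → Fin K → Fin K → ℝ) (p0 : Fin K → ℝ) (c : ℕ → ℝ) (hc0 : c 0 ≠ 0) :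
    Sunroll E pbar q p0 c 0 = S0mat p0 := by
  unfold Sunroll
  rw [show (1 : ℕ) = 0 + 1 from rfl, Jmat_self_succ]
  simp [div_self hc0]

lemma Sunroll_succ {K : ℕ} (E : Finset (Fin K × Fin K)) (pbar : ℕ → Fin K → Fin K → ℝ)
    (q : ℕ → Fin K → Fin K → ℝ) (p0 : Fin K → ℝ) (c : ℕ → ℝ) (hc : ∀ t, 0 < c t) (T : ℕ) :
    Sunroll E pbar q p0 c (T + 1) =
      (c (T + 1) / c T) •
        (Pbar E pbar (T + 1) * Sunroll E pbar q p0 c T * (Pbar E pbar (T + 1))ᵀ)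
        + Qmat E pbar q (T + 1) := by
  have hPJ1 : Jmat (Pbar E pbar) (T + 1) 1 = Pbar E pbar (T + 1) * Jmat (Pbar E pbar) T 1 :=
    Jmat_succ _ (by omega)
  have hIcc : Finset.Icc 1 (T + 1) = insert (T + 1) (Finset.Icc 1 T) := by
    rw [← Finset.insert_Icc_right_eq_Icc_add_one (by omega)]
  have hbb : ∀ t, (c (T + 1) / c T) * (c T / c t) = c (T + 1) / c t := fun t => by
    have h1 : c T ≠ 0 := ne_of_gt (hc T)
    have h2 : c t ≠ 0 := ne_of_gt (hc t)
    field_simp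
  unfold Sunroll
  rw [hIcc, Finset.sum_insert (by simp), hPJ1]
  rw [Finset.sum_congr rfl (fun t ht => by
    rw [Jmat_succ _ (by rw [Finset.mem_Icc] at ht; omega)])]
  rw [Jmat_self_succ]
  simp only [Matrix.transpose_mul, Matrix.mul_add, Matrix.add_mul, Matrix.mul_sum,
    Matrix.sum_mul, Matrix.mul_smul, Matrix.smul_mul, smul_add, Finset.smul_sum, smul_smul,
    Matrix.mul_assoc, hbb, div_self (ne_of_gt (hc (T + 1))), one_smul, Matrix.one_mul,
    Matrix.transpose_one, Matrix.mul_one]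
  abel

lemma Sig_repr {K d : ℕ} (E : Finset (Fin K × Fin K)) (pbar : ℕ → Fin K → Fin K → ℝ)
    (q : ℕ → Fin K → Fin K → ℝ) (p0 : Fin K → ℝ) (c : ℕ → ℝ)
    (Vstar : Matrix (Fin d) (Fin d) ℝ)
    (Sig : ℕ → Matrix (Fin K × Fin d) (Fin K × Fin d) ℝ)
    (hc : ∀ t, 0 < c t)
    (hSig0 : Sig 0 = Sigma0 ∅ p0 Vstar)
    (hSigrec : ∀ t, 1 ≤ t → Sig t =
      (c t / c (t - 1)) • (kronId (Pbar E pbar t) * Sig (t - 1) * (kronId (Pbar E pbar t))ᵀ)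
        + Vt E pbar q Vstar t) :
    ∀ T (p r : Fin K × Fin d),
      Sig T p r = Sunroll E pbar q p0 c T p.1 r.1 * Vstar p.2 r.2 := by
  intro T
  induction T with
  | zero =>
    intro p r
    rw [hSig0, Sunroll_zero E pbar q p0 c (ne_of_gt (hc 0))]
    simp only [Sigma0, S0mat, Matrix.of_apply, Finset.notMem_empty, not_false_iff, and_true]
    by_cases h : p.1 = r.1 <;> simp [h]
  | succ T ih =>
    intro p r
    rw [hSigrec (T + 1) (by omega)]
    simp only [Nat.add_sub_cancel]
    rw [Sunroll_succ E pbar q p0 c hc T]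
    rw [Matrix.add_apply, Matrix.smul_apply,
      kron_conj (Pbar E pbar (T + 1)) (Sunroll E pbar q p0 c T) Vstar (Sig T) ih p r,
      Matrix.add_apply, Matrix.smul_apply]
    have hVQ : Vt E pbar q Vstar (T + 1) p r
        = Qmat E pbar q (T + 1) p.1 r.1 * Vstar p.2 r.2 := by
      simp only [Vt, Qmat, Matrix.of_apply]
      split <;> simp [mul_assoc]
    rw [hVQ, smul_eq_mul, smul_eq_mul]
    ring

lemma Sunroll_bound {K : ℕ} (E : Finset (Fin K × Fin K)) (pbar : ℕ → Fin K → Fin K → ℝ)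
    (q : ℕ → Fin K → Fin K → ℝ) (p0 : Fin K → ℝ) (c : ℕ → ℝ) {α : ℝ}
    (hα0 : 0 < α) (hc : ∀ t, 0 < c t)
    (hpbarα : ∀ t, 1 ≤ t → ∀ ν μ : Fin K, (ν, μ) ∈ E → α ≤ pbar t ν μ)
    (hp0α : ∀ μ : Fin K, α ≤ p0 μ)
    (hqle : ∀ t, 1 ≤ t → ∀ ν₁ ∈ Ml E, ∀ ν₂ ∈ Ml E,
      q t ν₁ ν₂ ≤ min (wgt E pbar t ν₁) (wgt E pbar t ν₂))
    (μ : Fin K) (hμ : μ ∈ Ml E) (T : ℕ) :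
    Sunroll E pbar q p0 c T μ μ ≤
      (∑ t ∈ Finset.Icc 1 T,
        (c T / c t) * (∑ ν ∈ Ml E, Jmat (Pbar E pbar) T (t + 1) μ ν) ^ 2 /
          ((Ml E).inf' ⟨μ, hμ⟩ (fun ν => wgt E pbar t ν)))
      + (c T / c 0) / (Finset.univ.inf' ⟨μ, Finset.mem_univ μ⟩ p0) := by
  have hminp0 : 0 < Finset.univ.inf' ⟨μ, Finset.mem_univ μ⟩ p0 :=
    lt_of_lt_of_le hα0 (Finset.le_inf' _ _ fun ν _ => hp0α ν)
  unfold Sunroll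
  rw [Matrix.add_apply, Matrix.sum_apply, add_comm]
  apply add_le_add
  · -- sum over t of Q terms
    apply Finset.sum_le_sum
    intro t ht
    rw [Finset.mem_Icc] at ht
    obtain ⟨hJnn, hJrs⟩ := Jmat_stoch (E := E) (pbar := pbar) hα0 hpbarα
      (t := T) (s := t + 1) (by omega)
    set J := Jmat (Pbar E pbar) T (t + 1) with hJ
    set m := (Ml E).inf' ⟨μ, hμ⟩ (fun ν => wgt E pbar t ν) with hm
    have hmα : α ≤ m := Finset.le_inf' _ _ fun ν hν => wgt_ge hα0 (hpbarα t ht.1) hν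
    have hmpos : 0 < m := lt_of_lt_of_le hα0 hmα
    have hwpos : ∀ ν ∈ Ml E, 0 < wgt E pbar t ν := fun ν hν =>
      lt_of_lt_of_le hα0 (wgt_ge hα0 (hpbarα t ht.1) hν)
    have hexpand : (J * Qmat E pbar q t * Jᵀ) μ μ =
        ∑ ν2, ∑ ν1, J μ ν1 * Qmat E pbar q t ν1 ν2 * J μ ν2 := by
      simp only [Matrix.mul_apply, Matrix.transpose_apply, Finset.sum_mul]
    have hterm : ∀ ν1 ν2 : Fin K, J μ ν1 * Qmat E pbar q t ν1 ν2 * J μ ν2 ≤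
        (if ν1 ∈ Ml E then J μ ν1 else 0) * (if ν2 ∈ Ml E then J μ ν2 else 0) * (1 / m) := by
      intro ν1 ν2
      by_cases h1 : ν1 ∈ Ml E
      · by_cases h2 : ν2 ∈ Ml E
        · rw [if_pos h1, if_pos h2]
          simp only [Qmat, Matrix.of_apply, if_pos (And.intro h1 h2)]
          have hq1 : q t ν1 ν2 / (wgt E pbar t ν1 * wgt E pbar t ν2) ≤ 1 / m := by
            rw [div_le_div_iff₀ (mul_pos (hwpos ν1 h1) (hwpos ν2 h2)) hmpos, one_mul]
            apply mul_le_mul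
            · exact le_trans (hqle t ht.1 ν1 h1 ν2 h2) (min_le_left _ _)
            · exact Finset.inf'_le _ h2
            · exact le_of_lt hmpos
            · exact le_of_lt (hwpos ν1 h1)
          calc J μ ν1 * (q t ν1 ν2 / (wgt E pbar t ν1 * wgt E pbar t ν2)) * J μ ν2
              ≤ J μ ν1 * (1 / m) * J μ ν2 :=
                mul_le_mul_of_nonneg_right
                  (mul_le_mul_of_nonneg_left hq1 (hJnn μ ν1)) (hJnn μ ν2)
            _ = J μ ν1 * J μ ν2 * (1 / m) := by ring
        · rw [if_neg h2]
          simp [Qmat, h2]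
      · rw [if_neg h1]
        simp [Qmat, h1]
    have hsum : ∑ ν2, ∑ ν1, (if ν1 ∈ Ml E then J μ ν1 else 0) *
          (if ν2 ∈ Ml E then J μ ν2 else 0) * (1 / m)
        = (∑ ν ∈ Ml E, J μ ν) ^ 2 * (1 / m) := by
      simp only [mul_assoc, ← Finset.sum_mul, ← Finset.mul_sum]
      simp only [Finset.sum_ite_mem, Finset.univ_inter]
      ring
    rw [Matrix.smul_apply, smul_eq_mul, hexpand]
    have hbody : ∑ ν2, ∑ ν1, J μ ν1 * Qmat E pbar q t ν1 ν2 * J μ ν2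
        ≤ (∑ ν ∈ Ml E, J μ ν) ^ 2 * (1 / m) := by
      rw [← hsum]
      exact Finset.sum_le_sum fun ν2 _ => Finset.sum_le_sum fun ν1 _ => hterm ν1 ν2
    calc (c T / c t) * (∑ ν2, ∑ ν1, J μ ν1 * Qmat E pbar q t ν1 ν2 * J μ ν2)
        ≤ (c T / c t) * ((∑ ν ∈ Ml E, J μ ν) ^ 2 * (1 / m)) :=
          mul_le_mul_of_nonneg_left hbody
            (le_of_lt (div_pos (hc T) (hc t)))
      _ = (c T / c t) * (∑ ν ∈ Ml E, J μ ν) ^ 2 / m := by ring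
  · -- initial term
    obtain ⟨hJnn, hJrs⟩ := Jmat_stoch (E := E) (pbar := pbar) hα0 hpbarα
      (t := T) (s := 1) le_rfl
    set J := Jmat (Pbar E pbar) T 1 with hJ
    set m0 := Finset.univ.inf' ⟨μ, Finset.mem_univ μ⟩ p0 with hm0
    have hJle1 : ∀ ν, J μ ν ≤ 1 := by
      intro ν
      rw [← hJrs μ]
      exact Finset.single_le_sum (fun i _ => hJnn μ i) (Finset.mem_univ ν)
    have hdiag : (J * S0mat p0 * Jᵀ) μ μ = ∑ ν, J μ ν * (1 / p0 ν) * J μ ν := by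
      simp only [Matrix.mul_apply, Matrix.transpose_apply, S0mat, Matrix.of_apply,
        mul_ite, mul_zero, Finset.sum_ite_eq', Finset.mem_univ, if_true]
    have hbody : ∑ ν, J μ ν * (1 / p0 ν) * J μ ν ≤ 1 / m0 := by
      calc ∑ ν, J μ ν * (1 / p0 ν) * J μ ν ≤ ∑ ν, J μ ν * (1 / m0) * 1 := by
            apply Finset.sum_le_sum
            intro ν _
            apply mul_le_mul _ (hJle1 ν) (hJnn μ ν)
            · exact mul_nonneg (hJnn μ ν) (le_of_lt (one_div_pos.2 hminp0))
            · apply mul_le_mul_of_nonneg_left _ (hJnn μ ν)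
              exact one_div_le_one_div_of_le hminp0 (Finset.inf'_le _ (Finset.mem_univ ν))
        _ = (∑ ν, J μ ν) * (1 / m0) := by
            simp only [mul_one, ← Finset.sum_mul]
        _ = 1 / m0 := by rw [hJrs μ, one_mul]
    rw [Matrix.smul_apply, smul_eq_mul, hdiag]
    calc (c T / c 0) * (∑ ν, J μ ν * (1 / p0 ν) * J μ ν)
        ≤ (c T / c 0) * (1 / m0) :=
          mul_le_mul_of_nonneg_left hbody (le_of_lt (div_pos (hc T) (hc 0)))
      _ = (c T / c 0) / m0 := by rw [mul_one_div]

end Stmt5Aux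

/-- When `M_nature = ∅`, for every `μ ∈ M_l` and `T ≥ 1`,
`Σ_{T,μ,μ} ⪯ (∑_{t=1}^T b_{T,t} (∑_{ν∈M_l} J̄_{T,t+1,μ,ν})² / (min_{ν∈M_l} w_{t,ν})
 + b_{T,0} / (min_{ν∈M} p̄_{0,ν})) · V*` in the positive semidefinite order. -/
theorem stmt5
    {K d : ℕ} (hK : 1 ≤ K) (hd : 1 ≤ d)
    (E : Finset (Fin K × Fin K))
    (α ᾱ : ℝ) (hα0 : 0 < α) (hα1 : α ≤ 1) (hᾱ : 1 ≤ ᾱ)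
    (Mnature : Finset (Fin K)) (hMnat : Mnature ⊆ Mu E)
    (Vstar : Matrix (Fin d) (Fin d) ℝ) (hVpsd : Vstar.PosSemidef) (hVtr : 0 < Vstar.trace)
    (c : ℕ → ℝ) (hc : ∀ t, 0 < c t)
    (hb : ∀ t s : ℕ, α ≤ c t / c s ∧ c t / c s ≤ ᾱ)
    (pbar : ℕ → Fin K → Fin K → ℝ)
    (hpbarα : ∀ t, 1 ≤ t → ∀ ν μ : Fin K, (ν, μ) ∈ E → α ≤ pbar t ν μ)
    (hpbarsum : ∀ t, 1 ≤ t → ∑ e ∈ E, pbar t e.1 e.2 ≤ 1)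
    (p0 : Fin K → ℝ) (hp0α : ∀ μ ∉ Mnature, α ≤ p0 μ)
    (hp0sum : ∑ μ ∈ Finset.univ \ Mnature, p0 μ ≤ 1)
    (q : ℕ → Fin K → Fin K → ℝ)
    (hqsymm : ∀ t, 1 ≤ t → ∀ ν₁ ∈ Ml E, ∀ ν₂ ∈ Ml E, q t ν₁ ν₂ = q t ν₂ ν₁)
    (hqnn : ∀ t, 1 ≤ t → ∀ ν₁ ∈ Ml E, ∀ ν₂ ∈ Ml E, 0 ≤ q t ν₁ ν₂)
    (hqle : ∀ t, 1 ≤ t → ∀ ν₁ ∈ Ml E, ∀ ν₂ ∈ Ml E,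
      q t ν₁ ν₂ ≤ min (wgt E pbar t ν₁) (wgt E pbar t ν₂))
    (hqdiag : ∀ t, 1 ≤ t → ∀ ν ∈ Ml E, q t ν ν = wgt E pbar t ν)
    (Sig : ℕ → Matrix (Fin K × Fin d) (Fin K × Fin d) ℝ)
    (hSig0 : Sig 0 = Sigma0 Mnature p0 Vstar)
    (hSigrec : ∀ t, 1 ≤ t → Sig t =
      (c t / c (t - 1)) • (kronId (Pbar E pbar t) * Sig (t - 1) * (kronId (Pbar E pbar t))ᵀ)
        + Vt E pbar q Vstar t)
    (hMnatEmpty : Mnature = ∅) :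
    ∀ (μ : Fin K) (hμ : μ ∈ Ml E), ∀ T : ℕ, 1 ≤ T →
      (((∑ t ∈ Finset.Icc 1 T,
            (c T / c t) * (∑ ν ∈ Ml E, Jmat (Pbar E pbar) T (t + 1) μ ν) ^ 2 /
              ((Ml E).inf' ⟨μ, hμ⟩ (fun ν => wgt E pbar t ν))) +
          (c T / c 0) / (Finset.univ.inf' ⟨μ, Finset.mem_univ μ⟩ p0)) • Vstar -
        Matrix.of (fun a b : Fin d => Sig T (μ, a) (μ, b))).PosSemidef := by
  intro μ hμ T hT
  have hp0α' : ∀ ν : Fin K, α ≤ p0 ν := fun ν => hp0α ν (by simp [hMnatEmpty])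
  have hrepr := Stmt5Aux.Sig_repr E pbar q p0 c Vstar Sig hc
    (by rw [hSig0, hMnatEmpty]) hSigrec
  have hof : (Matrix.of fun a b : Fin d => Sig T (μ, a) (μ, b)) =
      Stmt5Aux.Sunroll E pbar q p0 c T μ μ • Vstar := by
    ext a b
    rw [Matrix.of_apply, hrepr T (μ, a) (μ, b), Matrix.smul_apply, smul_eq_mul]
  rw [hof, ← sub_smul]
  apply Stmt5Aux.smul_psd hVpsd
  rw [sub_nonneg]
  exact Stmt5Aux.Sunroll_bound E pbar q p0 c hα0 hc hpbarα hp0α' hqle μ hμ T
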